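/- Let N ≥ 2, wα ∈ ℝⁿ for α = 1,…,N, v ∈ ℝⁿ, γ̂α ∈ ℝ for α = 1,…,N-1 with γ̂_N = -∑_{α<N} γ̂α. Define βα = (1/2)γ̂α(wα + w_N + 2v) for α ≤ N-1 and β_N = -∑_{α<N} βα. Then ∑_{α=1}^{N} wα · ( βα - γ̂α((1/2)wα + v) ) = 0. -/

import Mathlib

theorem stmt_17 (n N : ℕ) (hN : 1 ≤ N)
    (w : Fin (N + 1) → EuclideanSpace ℝ (Fin n)) (v : EuclideanSpace ℝ (Fin n))
    (γ : Fin (N + 1) → ℝ)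
    (hγN : γ (Fin.last N) = -∑ α : Fin N, γ α.castSucc)
    (β : Fin (N + 1) → EuclideanSpace ℝ (Fin n))
    (hβ : ∀ α : Fin N, β α.castSucc
      = ((1 : ℝ) / 2 * γ α.castSucc) • (w α.castSucc + w (Fin.last N) + (2 : ℝ) • v))
    (hβN : β (Fin.last N) = -∑ α : Fin N, β α.castSucc) :
    ∑ α, (inner ℝ (w α) (β α - γ α • ((2 : ℝ)⁻¹ • w α + v)) : ℝ) = 0 := by
  rw [Fin.sum_univ_castSucc, hβN, hγN]
  simp only [hβ, inner_sub_right, inner_neg_right, inner_sum, inner_smul_right,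
    inner_add_right, neg_smul, real_inner_comm (w (Fin.last N))]
  rw [sub_neg_eq_add, Finset.sum_mul, ← Finset.sum_neg_distrib, ← Finset.sum_add_distrib,
    ← Finset.sum_add_distrib]
  refine Finset.sum_eq_zero fun α _ => ?_
  rw [real_inner_comm (w α.castSucc) (w (Fin.last N))]
  ring
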